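/- Let p ≥ 2, n ≥ 1 and k ≥ 1 be integers and assume the composite-objective setting: ρ_λ satisfies Assumption 1 with parameters λ > 0, L > 0, μ ≥ 0; L_n is differentiable and satisfies the RSC2 conditions with constants α₁, α₂ > 0 and τ₁, τ₂ ≥ 0; set α := min{α₁, α₂}. Let β* ∈ C with ‖β*‖₂ ≤ 1 and ‖β*‖₀ ≤ k, and suppose μ < 2α, λL ≥ 8‖∇L_n(β*)‖_∞, λL ≥ 16Rτ₁(log p)/n, λL ≥ 4τ₂√((log p)/n), and (2R/α₂)·(3λL/8 + τ₂√((log p)/n)) < 3. Let β̂ be a global minimizer of φ over C, let η̄ ≥ 0, and let β ∈ C satisfy φ(β) ≤ φ(β̂) + η̄. Then ‖β − β̂‖₁ ≤ 8√k·‖β − β̂‖₂ + 16√k·‖β̂ − β*‖₂ + 2·min{2η̄/(λL), R}. -/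

import Mathlib

open Finset

noncomputable def l1 {p : ℕ} (x : Fin p → ℝ) : ℝ := ∑ i, |x i|

noncomputable def l2 {p : ℕ} (x : Fin p → ℝ) : ℝ := Real.sqrt (∑ i, (x i) ^ 2)

noncomputable def linf {p : ℕ} (x : Fin p → ℝ) : ℝ := ⨆ i, |x i|

noncomputable def l0 {p : ℕ} (x : Fin p → ℝ) : ℕ :=
  (Finset.univ.filter (fun i => x i ≠ 0)).card

noncomputable def dot {p : ℕ} (x y : Fin p → ℝ) : ℝ := ∑ i, x i * y i

noncomputable def rhoVec {p : ℕ} (ρ : ℝ → ℝ) (x : Fin p → ℝ) : ℝ := ∑ i, ρ (x i)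

/-- Assumption 1 on the regularizer `ρ_λ` with parameters `λ, L, μ`. -/
structure Assumption1 (ρ : ℝ → ℝ) (lam L mu : ℝ) : Prop where
  zero : ρ 0 = 0
  even : ∀ t : ℝ, ρ (-t) = ρ t
  mono : ∀ s t : ℝ, 0 ≤ s → s ≤ t → ρ s ≤ ρ t
  slope : ∀ s t : ℝ, 0 < s → s ≤ t → ρ t / t ≤ ρ s / s
  diff : ∀ t : ℝ, t ≠ 0 → DifferentiableAt ℝ ρ t
  deriv_lim : Filter.Tendsto (deriv ρ) (nhdsWithin 0 (Set.Ioi 0)) (nhds (lam * L))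
  conv : ConvexOn ℝ Set.univ (fun t => ρ t + (mu / 2) * t ^ 2)

/-- Taylor error `T(β₁, β₂) = L_n(β₁) − L_n(β₂) − ⟨∇L_n(β₂), β₁ − β₂⟩`. -/
noncomputable def taylorErr {p : ℕ} (Ln : (Fin p → ℝ) → ℝ)
    (gradLn : (Fin p → ℝ) → (Fin p → ℝ)) (b1 b2 : Fin p → ℝ) : ℝ :=
  Ln b1 - Ln b2 - dot (gradLn b2) (b1 - b2)

/-- The RSC conditions used for the optimization theory (over the feasible region). -/
def RSC2 {p : ℕ} (n : ℕ) (Ln : (Fin p → ℝ) → ℝ)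
    (gradLn : (Fin p → ℝ) → (Fin p → ℝ)) (R a1 a2 t1 t2 : ℝ) : Prop :=
  ∀ b2 : Fin p → ℝ, l2 b2 ≤ 3 → l1 b2 ≤ R → ∀ b1 : Fin p → ℝ, l1 b1 ≤ R →
    (l2 (b1 - b2) ≤ 3 →
      taylorErr Ln gradLn b1 b2 ≥
        a1 * (l2 (b1 - b2)) ^ 2 - t1 * (Real.log p / n) * (l1 (b1 - b2)) ^ 2) ∧
    (3 ≤ l2 (b1 - b2) →
      taylorErr Ln gradLn b1 b2 ≥
        a2 * l2 (b1 - b2) - t2 * Real.sqrt (Real.log p / n) * l1 (b1 - b2))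

/-- The restricted smoothness (RSM) condition. -/
def RSM {p : ℕ} (n : ℕ) (Ln : (Fin p → ℝ) → ℝ)
    (gradLn : (Fin p → ℝ) → (Fin p → ℝ)) (a3 t3 : ℝ) : Prop :=
  ∀ b1 b2 : Fin p → ℝ,
    taylorErr Ln gradLn b1 b2 ≤
      a3 * (l2 (b1 - b2)) ^ 2 + t3 * (Real.log p / n) * (l1 (b1 - b2)) ^ 2

/-- Side function `g_{λ,μ}(β) = λ⁻¹ (ρ_λ(β) + (μ/2)‖β‖₂²)`. -/
noncomputable def gside {p : ℕ} (ρ : ℝ → ℝ) (lam mu : ℝ) (β : Fin p → ℝ) : ℝ :=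
  lam⁻¹ * (rhoVec ρ β + (mu / 2) * (l2 β) ^ 2)

/-- Composite objective `φ(β) = L_n(β) + ρ_λ(β)`. -/
noncomputable def phiObj {p : ℕ} (Ln : (Fin p → ℝ) → ℝ) (ρ : ℝ → ℝ)
    (β : Fin p → ℝ) : ℝ :=
  Ln β + rhoVec ρ β

/-- Composite gradient descent iterates with stepsize `1/η` on the feasible set
`C = {β : g_{λ,μ}(β) ≤ R}`, for the modified loss `L̄_n(β) = L_n(β) − (μ/2)‖β‖₂²`
(whose gradient is `∇L_n(β) − μβ`). -/
def CompIter {p : ℕ} (ρ : ℝ → ℝ) (lam mu eta R : ℝ)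
    (gradLn : (Fin p → ℝ) → (Fin p → ℝ)) (βs : ℕ → Fin p → ℝ) : Prop :=
  (∀ t : ℕ, gside ρ lam mu (βs t) ≤ R) ∧
  ∀ t : ℕ, ∀ γ : Fin p → ℝ, gside ρ lam mu γ ≤ R →
    (1 / 2) * (l2 (βs (t + 1) - (βs t - eta⁻¹ • (gradLn (βs t) - mu • βs t)))) ^ 2 +
        (lam / eta) * gside ρ lam mu (βs (t + 1)) ≤
      (1 / 2) * (l2 (γ - (βs t - eta⁻¹ • (gradLn (βs t) - mu • βs t)))) ^ 2 +
        (lam / eta) * gside ρ lam mu γ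

/-! ### Auxiliary lemmas about the regularizer -/

section RhoAux

variable {ρ : ℝ → ℝ} {lam L mu : ℝ}

lemma rho_abs_eq (hA1 : Assumption1 ρ lam L mu) (t : ℝ) : ρ |t| = ρ t := by
  rcases abs_cases t with ⟨h, _⟩ | ⟨h, _⟩
  · rw [h]
  · rw [h, hA1.even]

lemma rho_nonneg (hA1 : Assumption1 ρ lam L mu) (t : ℝ) : 0 ≤ ρ t := by
  rw [← rho_abs_eq hA1]
  have h := hA1.mono 0 |t| le_rfl (abs_nonneg t)
  rwa [hA1.zero] at h

lemma rho_continuous (hA1 : Assumption1 ρ lam L mu) : Continuous ρ := by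
  have h2 : Continuous (fun t : ℝ => ρ t + (mu / 2) * t ^ 2) := by
    rw [← continuousOn_univ]
    exact hA1.conv.continuousOn isOpen_univ
  have h3 : Continuous (fun t : ℝ => (mu / 2) * t ^ 2) := by continuity
  have h4 : ρ = fun t : ℝ => (ρ t + (mu / 2) * t ^ 2) - (mu / 2) * t ^ 2 := by
    funext t; ring
  rw [h4]
  exact h2.sub h3

lemma deriv_near (hA1 : Assumption1 ρ lam L mu) {ε : ℝ} (hε : 0 < ε) :
    ∃ δ > 0, ∀ c : ℝ, 0 < c → c < δ → |deriv ρ c - lam * L| < ε := by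
  have h := Metric.tendsto_nhds.mp hA1.deriv_lim ε hε
  rw [eventually_nhdsWithin_iff, Metric.eventually_nhds_iff] at h
  obtain ⟨δ, hδ, h3⟩ := h
  refine ⟨δ, hδ, fun c hc1 hc2 => ?_⟩
  have := h3 (show dist c 0 < δ by
    rw [Real.dist_eq, sub_zero, abs_of_pos hc1]; exact hc2) hc1
  rwa [Real.dist_eq] at this

lemma rho_slope_eq_deriv (hA1 : Assumption1 ρ lam L mu) {s : ℝ} (hs : 0 < s) :
    ∃ c ∈ Set.Ioo 0 s, deriv ρ c = ρ s / s := by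
  obtain ⟨c, hc, hderiv⟩ := exists_deriv_eq_slope ρ hs
    ((rho_continuous hA1).continuousOn)
    (fun x hx => (hA1.diff x (ne_of_gt hx.1)).differentiableWithinAt)
  refine ⟨c, hc, ?_⟩
  rw [hderiv, hA1.zero, sub_zero, sub_zero]

lemma rho_le (hA1 : Assumption1 ρ lam L mu) {t : ℝ} (ht : 0 ≤ t) :
    ρ t ≤ lam * L * t := by
  rcases eq_or_lt_of_le ht with h | h
  · simp [← h, hA1.zero]
  by_contra hcon
  push_neg at hcon
  have hq : lam * L < ρ t / t := (lt_div_iff₀ h).mpr hcon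
  obtain ⟨δ, hδ, hnear⟩ := deriv_near hA1 (sub_pos.mpr hq)
  have hs0 : 0 < min t (δ / 2) := lt_min h (by linarith)
  obtain ⟨c, hc, hcd⟩ := rho_slope_eq_deriv hA1 hs0
  have hslope := hA1.slope (min t (δ / 2)) t hs0 (min_le_left _ _)
  have hcδ : c < δ := lt_of_lt_of_le hc.2 ((min_le_right _ _).trans (by linarith))
  have hval := hnear c hc.1 hcδ
  rw [hcd] at hval
  have habs := abs_lt.mp hval
  linarith [habs.2]

lemma rho_ge (hmu : 0 ≤ mu) (hA1 : Assumption1 ρ lam L mu) {t : ℝ} (ht : 0 ≤ t) :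
    lam * L * t - (mu / 2) * t ^ 2 ≤ ρ t := by
  rcases eq_or_lt_of_le ht with h | h
  · simp [← h, hA1.zero]
  by_contra hcon
  push_neg at hcon
  have hq : (ρ t + (mu / 2) * t ^ 2) / t < lam * L := by
    rw [div_lt_iff₀ h]; nlinarith
  obtain ⟨δ, hδ, hnear⟩ := deriv_near hA1 (sub_pos.mpr hq)
  have hs0 : 0 < min t (δ / 2) := lt_min h (by linarith)
  set s := min t (δ / 2) with hs_def
  have hst : s ≤ t := min_le_left _ _
  have hsec := hA1.conv.secant_mono (a := 0) (x := s) (y := t)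
    (Set.mem_univ _) (Set.mem_univ _) (Set.mem_univ _) (ne_of_gt hs0) (ne_of_gt h) hst
  simp only [hA1.zero, sub_zero] at hsec
  norm_num at hsec
  -- hsec : (ρ s + mu / 2 * s ^ 2) / s ≤ (ρ t + mu / 2 * t ^ 2) / t
  obtain ⟨c, hc, hcd⟩ := rho_slope_eq_deriv hA1 hs0
  have hcδ : c < δ := lt_of_lt_of_le hc.2 ((min_le_right _ _).trans (by linarith))
  have hval := hnear c hc.1 hcδ
  rw [hcd] at hval
  have habs := abs_lt.mp hval
  have h1 : (ρ s + (mu / 2) * s ^ 2) / s = ρ s / s + (mu / 2) * s := by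
    field_simp
  have hmus : 0 ≤ (mu / 2) * s := by positivity
  linarith [habs.1]

lemma rho_le_abs (hA1 : Assumption1 ρ lam L mu) (t : ℝ) : ρ t ≤ lam * L * |t| := by
  rw [← rho_abs_eq hA1]
  exact rho_le hA1 (abs_nonneg t)

lemma rho_ge_abs (hmu : 0 ≤ mu) (hA1 : Assumption1 ρ lam L mu) (t : ℝ) :
    lam * L * |t| - (mu / 2) * t ^ 2 ≤ ρ t := by
  rw [← rho_abs_eq hA1]
  have := rho_ge hmu hA1 (abs_nonneg t)
  rwa [sq_abs] at this

lemma rho_subadd_nonneg (hA1 : Assumption1 ρ lam L mu) {u v : ℝ}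
    (hu : 0 ≤ u) (hv : 0 ≤ v) : ρ (u + v) ≤ ρ u + ρ v := by
  rcases eq_or_lt_of_le hu with h | hu'
  · simp [← h, hA1.zero]
  rcases eq_or_lt_of_le hv with h | hv'
  · simp [← h, hA1.zero]
  have huv : (0:ℝ) < u + v := by linarith
  have h1 : ρ (u + v) / (u + v) ≤ ρ u / u := hA1.slope u (u + v) hu' (by linarith)
  have h2 : ρ (u + v) / (u + v) ≤ ρ v / v := hA1.slope v (u + v) hv' (by linarith)
  have e1 : ρ (u + v) = u * (ρ (u + v) / (u + v)) + v * (ρ (u + v) / (u + v)) := by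
    field_simp
  have e2 : u * (ρ u / u) = ρ u := by field_simp
  have e3 : v * (ρ v / v) = ρ v := by field_simp
  calc ρ (u + v) = u * (ρ (u + v) / (u + v)) + v * (ρ (u + v) / (u + v)) := e1
    _ ≤ u * (ρ u / u) + v * (ρ v / v) := by
        gcongr
    _ = ρ u + ρ v := by rw [e2, e3]

lemma rho_subadd (hA1 : Assumption1 ρ lam L mu) (a b : ℝ) :
    ρ (a + b) ≤ ρ a + ρ b := by
  calc ρ (a + b) = ρ |a + b| := (rho_abs_eq hA1 _).symm
    _ ≤ ρ (|a| + |b|) := hA1.mono _ _ (abs_nonneg _) (abs_add_le a b)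
    _ ≤ ρ |a| + ρ |b| := rho_subadd_nonneg hA1 (abs_nonneg a) (abs_nonneg b)
    _ = ρ a + ρ b := by rw [rho_abs_eq hA1, rho_abs_eq hA1]

end RhoAux

/-! ### Auxiliary lemmas about the norms -/

section NormAux

variable {p : ℕ}

lemma l1_nonneg (x : Fin p → ℝ) : 0 ≤ l1 x :=
  Finset.sum_nonneg fun _ _ => abs_nonneg _

lemma l2_nonneg (x : Fin p → ℝ) : 0 ≤ l2 x := Real.sqrt_nonneg _

lemma l2_sq (x : Fin p → ℝ) : (l2 x) ^ 2 = ∑ i, x i ^ 2 :=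
  Real.sq_sqrt (Finset.sum_nonneg fun _ _ => sq_nonneg _)

lemma l1_sub_le (x y : Fin p → ℝ) : l1 (x - y) ≤ l1 x + l1 y := by
  rw [l1, l1, l1, ← Finset.sum_add_distrib]
  exact Finset.sum_le_sum fun i _ => abs_sub (x i) (y i)

lemma l2_add_le (x y : Fin p → ℝ) : l2 (x + y) ≤ l2 x + l2 y := by
  have hx : (0:ℝ) ≤ ∑ i, x i ^ 2 := Finset.sum_nonneg fun _ _ => sq_nonneg _
  have hy : (0:ℝ) ≤ ∑ i, y i ^ 2 := Finset.sum_nonneg fun _ _ => sq_nonneg _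
  have hcs := Real.sum_mul_le_sqrt_mul_sqrt Finset.univ x y
  have e1 : (l2 x) ^ 2 = ∑ i, x i ^ 2 := l2_sq x
  have e2 : (l2 y) ^ 2 = ∑ i, y i ^ 2 := l2_sq y
  have e3 : ∑ i, (x i + y i) ^ 2
      = (∑ i, x i ^ 2) + 2 * (∑ i, x i * y i) + (∑ i, y i ^ 2) := by
    rw [Finset.mul_sum, ← Finset.sum_add_distrib, ← Finset.sum_add_distrib]
    exact Finset.sum_congr rfl fun i _ => by ring
  have key : ∑ i, (x i + y i) ^ 2 ≤ (l2 x + l2 y) ^ 2 := by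
    have hl2x : l2 x = Real.sqrt (∑ i, x i ^ 2) := rfl
    have hl2y : l2 y = Real.sqrt (∑ i, y i ^ 2) := rfl
    nlinarith [hcs, e1, e2, e3, Real.sqrt_nonneg (∑ i, x i ^ 2),
      Real.sqrt_nonneg (∑ i, y i ^ 2)]
  have h5 : l2 (x + y) = Real.sqrt (∑ i, (x i + y i) ^ 2) := by simp [l2]
  rw [h5]
  calc Real.sqrt (∑ i, (x i + y i) ^ 2) ≤ Real.sqrt ((l2 x + l2 y) ^ 2) :=
        Real.sqrt_le_sqrt key
    _ = l2 x + l2 y := Real.sqrt_sq (add_nonneg (l2_nonneg x) (l2_nonneg y))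

lemma sum_abs_le_sqrt_card_mul_l2 (A : Finset (Fin p)) (x : Fin p → ℝ) :
    ∑ i ∈ A, |x i| ≤ Real.sqrt A.card * l2 x := by
  have h := Real.sum_mul_le_sqrt_mul_sqrt A (fun _ => (1:ℝ)) (fun i => |x i|)
  simp only [one_mul, one_pow] at h
  have e1 : ∑ _i ∈ A, (1:ℝ) = A.card := by simp
  have h2 : ∑ i ∈ A, |x i| ^ 2 ≤ ∑ i, x i ^ 2 := by
    rw [Finset.sum_congr rfl (fun i _ => sq_abs (x i))]
    exact Finset.sum_le_sum_of_subset_of_nonneg A.subset_univ fun i _ _ => sq_nonneg _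
  calc ∑ i ∈ A, |x i|
      ≤ Real.sqrt (∑ _i ∈ A, (1:ℝ)) * Real.sqrt (∑ i ∈ A, |x i| ^ 2) := h
    _ = Real.sqrt A.card * Real.sqrt (∑ i ∈ A, |x i| ^ 2) := by rw [e1]
    _ ≤ Real.sqrt A.card * l2 x := by
        exact mul_le_mul_of_nonneg_left (Real.sqrt_le_sqrt h2) (Real.sqrt_nonneg _)

lemma abs_le_linf (x : Fin p → ℝ) (i : Fin p) : |x i| ≤ linf x :=
  le_ciSup (f := fun j => |x j|) (Set.Finite.bddAbove (Set.finite_range _)) i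

lemma abs_dot_le (x y : Fin p → ℝ) : |dot x y| ≤ linf x * l1 y := by
  rw [dot, l1]
  calc |∑ i, x i * y i| ≤ ∑ i, |x i * y i| := Finset.abs_sum_le_sum_abs _ _
    _ ≤ ∑ i, linf x * |y i| := Finset.sum_le_sum fun i _ => by
        rw [abs_mul]
        exact mul_le_mul_of_nonneg_right (abs_le_linf x i) (abs_nonneg _)
    _ = linf x * ∑ i, |y i| := by rw [Finset.mul_sum]

lemma rhoVec_nonneg {ρ : ℝ → ℝ} {lam L mu : ℝ} (hA1 : Assumption1 ρ lam L mu)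
    (x : Fin p → ℝ) : 0 ≤ rhoVec ρ x :=
  Finset.sum_nonneg fun i _ => rho_nonneg hA1 _

lemma rhoVec_le {ρ : ℝ → ℝ} {lam L mu : ℝ} (hA1 : Assumption1 ρ lam L mu)
    (x : Fin p → ℝ) : rhoVec ρ x ≤ lam * L * l1 x := by
  rw [rhoVec, l1, Finset.mul_sum]
  exact Finset.sum_le_sum fun i _ => rho_le_abs hA1 (x i)

end NormAux

set_option maxHeartbeats 1000000 in
theorem approximate_cone_condition
    {p n k : ℕ} (hp : 2 ≤ p) (hn : 1 ≤ n) (hk : 1 ≤ k)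
    (ρ : ℝ → ℝ) (lam L mu : ℝ) (hlam : 0 < lam) (hL : 0 < L) (hmu : 0 ≤ mu)
    (hA1 : Assumption1 ρ lam L mu)
    (Ln : (Fin p → ℝ) → ℝ) (gradLn : (Fin p → ℝ) → (Fin p → ℝ))
    (hdiff : ∀ β : Fin p → ℝ, HasFDerivAt Ln
      (∑ i, gradLn β i • (ContinuousLinearMap.proj i : (Fin p → ℝ) →L[ℝ] ℝ)) β)
    (R : ℝ) (hR : 0 < R)
    (a1 a2 t1 t2 : ℝ)
    (ha1 : 0 < a1) (ha2 : 0 < a2) (ht1 : 0 ≤ t1) (ht2 : 0 ≤ t2)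
    (hRSC2 : RSC2 n Ln gradLn R a1 a2 t1 t2)
    (α : ℝ) (hα : α = min a1 a2)
    (hgconv : ConvexOn ℝ Set.univ (gside ρ lam mu (p := p)))
    (hfeas : ∀ β : Fin p → ℝ, gside ρ lam mu β ≤ R → l1 β ≤ R)
    (bstar : Fin p → ℝ) (hbstar_feas : gside ρ lam mu bstar ≤ R)
    (hbstar_ball : l2 bstar ≤ 1) (hsparse : l0 bstar ≤ k)
    (hmuα : mu < 2 * α)
    (hlam1 : 8 * linf (gradLn bstar) ≤ lam * L)
    (hlam2 : 16 * R * t1 * (Real.log p / n) ≤ lam * L)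
    (hlam3 : 4 * t2 * Real.sqrt (Real.log p / n) ≤ lam * L)
    (hlam4 : (2 * R / a2) * (3 * lam * L / 8 + t2 * Real.sqrt (Real.log p / n)) < 3)
    (bhat : Fin p → ℝ) (hbhat_feas : gside ρ lam mu bhat ≤ R)
    (hbhat_min : ∀ β : Fin p → ℝ, gside ρ lam mu β ≤ R → phiObj Ln ρ bhat ≤ phiObj Ln ρ β)
    (ηbar : ℝ) (hηbar : 0 ≤ ηbar)
    (β : Fin p → ℝ) (hβ_feas : gside ρ lam mu β ≤ R)
    (hβ_obj : phiObj Ln ρ β ≤ phiObj Ln ρ bhat + ηbar) :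
    l1 (β - bhat) ≤ 8 * Real.sqrt k * l2 (β - bhat) +
      16 * Real.sqrt k * l2 (bhat - bstar) + 2 * min (2 * ηbar / (lam * L)) R := by
  have hll : 0 < lam * L := mul_pos hlam hL
  have hsk : (0:ℝ) ≤ Real.sqrt k := Real.sqrt_nonneg _
  have hlogn : (0:ℝ) ≤ Real.log p / n := by
    apply div_nonneg _ (Nat.cast_nonneg n)
    apply Real.log_nonneg
    exact_mod_cast le_trans one_le_two (by exact_mod_cast hp)
  have hl1_star : l1 bstar ≤ R := hfeas bstar hbstar_feas
  have hl1_hat : l1 bhat ≤ R := hfeas bhat hbhat_feas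
  have hl1_β : l1 β ≤ R := hfeas β hβ_feas
  have hφhat : phiObj Ln ρ bhat ≤ phiObj Ln ρ bstar := hbhat_min bstar hbstar_feas
  have hφβ : phiObj Ln ρ β ≤ phiObj Ln ρ bstar + ηbar := by linarith
  -- the support of bstar
  set A : Finset (Fin p) := Finset.univ.filter (fun i => bstar i ≠ 0) with hA_def
  have hcardA : (A.card : ℝ) ≤ (k : ℝ) := by
    have h : A.card ≤ k := by
      have h0 : l0 bstar = A.card := rfl
      exact h0 ▸ hsparse
    exact_mod_cast h
  have hsqrtA : Real.sqrt A.card ≤ Real.sqrt k := Real.sqrt_le_sqrt hcardA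
  have hbstar_zero : ∀ i, i ∉ A → bstar i = 0 := by
    intro i hi
    simpa [hA_def] using hi
  have hstar_l1 : l1 bstar ≤ Real.sqrt k := by
    have h0 : l1 bstar = ∑ i ∈ A, |bstar i| := by
      rw [l1]
      refine (Finset.sum_subset A.subset_univ (fun i _ hi => ?_)).symm
      rw [hbstar_zero i hi, abs_zero]
    rw [h0]
    calc ∑ i ∈ A, |bstar i| ≤ Real.sqrt A.card * l2 bstar :=
          sum_abs_le_sqrt_card_mul_l2 A bstar
      _ ≤ Real.sqrt k * 1 := mul_le_mul hsqrtA hbstar_ball (l2_nonneg _) hsk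
      _ = Real.sqrt k := mul_one _
  have hρstar : rhoVec ρ bstar ≤ lam * L * Real.sqrt k :=
    le_trans (rhoVec_le hA1 bstar) (mul_le_mul_of_nonneg_left hstar_l1 hll.le)
  -- the key per-vector analysis
  have main : ∀ (w : Fin p → ℝ) (e : ℝ), 0 ≤ e → gside ρ lam mu w ≤ R →
      phiObj Ln ρ w ≤ phiObj Ln ρ bstar + e →
      (l2 (w - bstar) ≤ 3 →
        l1 (w - bstar) ≤ (8/3) * Real.sqrt k * l2 (w - bstar) + (4/3) * (e / (lam * L)))
      ∧ (3 ≤ l2 (w - bstar) → R < 2 * Real.sqrt k + 2 * e / (lam * L)) := by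
    intro w e he hwfeas hφw
    have hl1w : l1 w ≤ R := hfeas w hwfeas
    have hl1ν : l1 (w - bstar) ≤ 2 * R := le_trans (l1_sub_le w bstar) (by linarith)
    have hl1ν0 : 0 ≤ l1 (w - bstar) := l1_nonneg _
    -- upper bound for the Taylor error
    have hTup : taylorErr Ln gradLn w bstar ≤
        rhoVec ρ bstar - rhoVec ρ w + (lam * L / 8) * l1 (w - bstar) + e := by
      rw [taylorErr]
      have h1 := abs_dot_le (gradLn bstar) (w - bstar)
      have h2 : linf (gradLn bstar) * l1 (w - bstar) ≤ (lam * L / 8) * l1 (w - bstar) :=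
        mul_le_mul_of_nonneg_right (by linarith) hl1ν0
      have h3 : -(lam * L / 8 * l1 (w - bstar)) ≤ dot (gradLn bstar) (w - bstar) := by
        have h4 := neg_abs_le (dot (gradLn bstar) (w - bstar))
        linarith
      have hLn : Ln w - Ln bstar ≤ rhoVec ρ bstar - rhoVec ρ w + e := by
        have h4 := hφw
        rw [phiObj, phiObj] at h4
        linarith
      linarith
    -- bound on the regularizer difference, coordinatewise
    have hD : rhoVec ρ bstar - rhoVec ρ w ≤
        lam * L * (∑ i ∈ A, |(w - bstar) i|) - lam * L * (∑ i ∈ Aᶜ, |(w - bstar) i|)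
          + (mu / 2) * ∑ i ∈ Aᶜ, ((w - bstar) i) ^ 2 := by
      have hb_eq : rhoVec ρ bstar = ∑ i ∈ A, ρ (bstar i) + ∑ i ∈ Aᶜ, ρ (bstar i) :=
        (Finset.sum_add_sum_compl A _).symm
      have hw_eq : rhoVec ρ w = ∑ i ∈ A, ρ (w i) + ∑ i ∈ Aᶜ, ρ (w i) :=
        (Finset.sum_add_sum_compl A _).symm
      have h1 : ∑ i ∈ A, ρ (bstar i) - ∑ i ∈ A, ρ (w i)
          ≤ lam * L * ∑ i ∈ A, |(w - bstar) i| := by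
        rw [Finset.mul_sum, ← Finset.sum_sub_distrib]
        refine Finset.sum_le_sum fun i _ => ?_
        have hsub : ρ (bstar i) ≤ ρ (w i) + ρ (bstar i - w i) := by
          have h := rho_subadd hA1 (w i) (bstar i - w i)
          simpa using h
        have h5 : ρ (bstar i - w i) ≤ lam * L * |bstar i - w i| := rho_le_abs hA1 _
        have h6 : |bstar i - w i| = |(w - bstar) i| := by
          rw [abs_sub_comm]; rfl
        rw [← h6]
        linarith
      have h2 : ∑ i ∈ Aᶜ, ρ (bstar i) - ∑ i ∈ Aᶜ, ρ (w i)
          ≤ -(lam * L * ∑ i ∈ Aᶜ, |(w - bstar) i|)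
            + (mu / 2) * ∑ i ∈ Aᶜ, ((w - bstar) i) ^ 2 := by
        have hpt : ∀ i ∈ Aᶜ, ρ (bstar i) - ρ (w i)
            ≤ -(lam * L * |(w - bstar) i|) + (mu / 2) * ((w - bstar) i) ^ 2 := by
          intro i hi
          have hb0 : bstar i = 0 := hbstar_zero i (Finset.mem_compl.mp hi)
          have hw : (w - bstar) i = w i := by simp [hb0]
          have h7 := rho_ge_abs hmu hA1 ((w - bstar) i)
          rw [hw] at h7
          rw [hb0, hA1.zero, hw]
          linarith
        calc ∑ i ∈ Aᶜ, ρ (bstar i) - ∑ i ∈ Aᶜ, ρ (w i)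
            = ∑ i ∈ Aᶜ, (ρ (bstar i) - ρ (w i)) := (Finset.sum_sub_distrib _ _).symm
          _ ≤ ∑ i ∈ Aᶜ, (-(lam * L * |(w - bstar) i|) + (mu / 2) * ((w - bstar) i) ^ 2) :=
              Finset.sum_le_sum hpt
          _ = -(lam * L * ∑ i ∈ Aᶜ, |(w - bstar) i|)
              + (mu / 2) * ∑ i ∈ Aᶜ, ((w - bstar) i) ^ 2 := by
              rw [Finset.sum_add_distrib, Finset.mul_sum, Finset.mul_sum, Finset.sum_neg_distrib]
      linarith
    have hRSC := hRSC2 bstar (by linarith) hl1_star w hl1w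
    constructor
    · -- near case : cone inequality
      intro hnear
      have hlow := hRSC.1 hnear
      have ht1' : t1 * (Real.log p / n) * (l1 (w - bstar)) ^ 2
          ≤ (lam * L / 8) * l1 (w - bstar) := by
        have h0 : t1 * (Real.log p / n) * l1 (w - bstar) ≤ lam * L / 8 := by
          have hmono : t1 * (Real.log p / n) * l1 (w - bstar)
              ≤ t1 * (Real.log p / n) * (2 * R) :=
            mul_le_mul_of_nonneg_left hl1ν (mul_nonneg ht1 hlogn)
          have heq : t1 * (Real.log p / n) * (2 * R)
              = 16 * R * t1 * (Real.log p / n) / 8 := by ring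
          linarith
        calc t1 * (Real.log p / n) * (l1 (w - bstar)) ^ 2
            = (t1 * (Real.log p / n) * l1 (w - bstar)) * l1 (w - bstar) := by ring
          _ ≤ (lam * L / 8) * l1 (w - bstar) := mul_le_mul_of_nonneg_right h0 hl1ν0
      have hsum2 : ∑ i ∈ Aᶜ, ((w - bstar) i) ^ 2 ≤ (l2 (w - bstar)) ^ 2 := by
        rw [l2_sq]
        exact Finset.sum_le_sum_of_subset_of_nonneg (Finset.subset_univ _)
          fun i _ _ => sq_nonneg _
      have hμa1 : mu / 2 ≤ a1 := by
        have h : α ≤ a1 := by rw [hα]; exact min_le_left _ _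
        linarith
      have hSA : ∑ i ∈ A, |(w - bstar) i| ≤ Real.sqrt k * l2 (w - bstar) := by
        calc ∑ i ∈ A, |(w - bstar) i| ≤ Real.sqrt A.card * l2 (w - bstar) :=
              sum_abs_le_sqrt_card_mul_l2 A _
          _ ≤ Real.sqrt k * l2 (w - bstar) :=
              mul_le_mul_of_nonneg_right hsqrtA (l2_nonneg _)
      have hl1split : l1 (w - bstar)
          = (∑ i ∈ A, |(w - bstar) i|) + ∑ i ∈ Aᶜ, |(w - bstar) i| :=
        (Finset.sum_add_sum_compl A _).symm
      set S := ∑ i ∈ A, |(w - bstar) i| with hS_def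
      set T := ∑ i ∈ Aᶜ, |(w - bstar) i| with hT_def
      rw [hl1split] at hTup hlow ht1'
      have f1 : mu / 2 * (∑ i ∈ Aᶜ, ((w - bstar) i) ^ 2)
          ≤ mu / 2 * (l2 (w - bstar)) ^ 2 :=
        mul_le_mul_of_nonneg_left hsum2 (by linarith)
      have f2 : mu / 2 * (l2 (w - bstar)) ^ 2 ≤ a1 * (l2 (w - bstar)) ^ 2 :=
        mul_le_mul_of_nonneg_right hμa1 (sq_nonneg _)
      have hkey : lam * L * T ≤ lam * L * S + (lam * L / 4) * (S + T) + e := by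
        linarith [hlow, hTup, hD, ht1', f1, f2]
      have hSA' : lam * L * S ≤ lam * L * (Real.sqrt k * l2 (w - bstar)) :=
        mul_le_mul_of_nonneg_left hSA hll.le
      have he' : lam * L * ((4/3) * (e / (lam * L))) = (4/3) * e := by
        field_simp
      have hgoal_mul : lam * L * (S + T)
          ≤ lam * L * ((8/3) * Real.sqrt k * l2 (w - bstar) + (4/3) * (e / (lam * L))) := by
        linarith [hkey, hSA', he']
      calc l1 (w - bstar) = S + T := hl1split
        _ ≤ (8/3) * Real.sqrt k * l2 (w - bstar) + (4/3) * (e / (lam * L)) :=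
            le_of_mul_le_mul_left hgoal_mul hll
    · -- far case : R must be small
      intro hfar
      have hlow := hRSC.2 hfar
      have hρw : 0 ≤ rhoVec ρ w := rhoVec_nonneg hA1 w
      have ht2' : t2 * Real.sqrt (Real.log p / n) * l1 (w - bstar)
          ≤ t2 * Real.sqrt (Real.log p / n) * (2 * R) :=
        mul_le_mul_of_nonneg_left hl1ν (mul_nonneg ht2 (Real.sqrt_nonneg _))
      have h8 : (lam * L / 8) * l1 (w - bstar) ≤ (lam * L / 8) * (2 * R) :=
        mul_le_mul_of_nonneg_left hl1ν (by positivity)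
      have hlam4' : 2 * R * (3 * lam * L / 8 + t2 * Real.sqrt (Real.log p / n))
          < 3 * a2 := by
        rw [div_mul_eq_mul_div, div_lt_iff₀ ha2] at hlam4
        linarith [hlam4]
      have hfar' : a2 * 3 ≤ a2 * l2 (w - bstar) := mul_le_mul_of_nonneg_left hfar ha2.le
      have hDs : rhoVec ρ bstar - rhoVec ρ w ≤ lam * L * Real.sqrt k := by linarith
      have hmain : lam * L * R / 2 < lam * L * Real.sqrt k + e := by
        linarith [hlow, hTup, hDs, ht2', h8, hlam4', hfar']
      have he' : lam * L * (2 * e / (lam * L)) = 2 * e := by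
        field_simp
      have hfin : lam * L * R < lam * L * (2 * Real.sqrt k + 2 * e / (lam * L)) := by
        linarith [hmain, he']
      exact lt_of_mul_lt_mul_left hfin hll.le
  -- triangle inequalities
  have htri_l1 : l1 (β - bhat) ≤ l1 (β - bstar) + l1 (bhat - bstar) := by
    have h : β - bhat = (β - bstar) - (bhat - bstar) :=
      (sub_sub_sub_cancel_right β bhat bstar).symm
    rw [h]; exact l1_sub_le _ _
  have htri_l2 : l2 (β - bstar) ≤ l2 (β - bhat) + l2 (bhat - bstar) := by
    have h : β - bstar = (β - bhat) + (bhat - bstar) :=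
      (sub_add_sub_cancel β bhat bstar).symm
    rw [h]; exact l2_add_le _ _
  have hsimple : l1 (β - bhat) ≤ 2 * R := le_trans (l1_sub_le β bhat) (by linarith)
  rcases le_or_gt R (2 * ηbar / (lam * L)) with hcase | hcase
  · -- trivial case : the min is R
    rw [min_eq_right hcase]
    have h0 : 0 ≤ 8 * Real.sqrt k * l2 (β - bhat) + 16 * Real.sqrt k * l2 (bhat - bstar) := by
      have := mul_nonneg hsk (l2_nonneg (β - bhat))
      have := mul_nonneg hsk (l2_nonneg (bhat - bstar))
      nlinarith
    linarith
  · rw [min_eq_left hcase.le]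
    have hη' : 0 ≤ 2 * ηbar / (lam * L) := div_nonneg (by linarith) hll.le
    rcases lt_or_ge 3 (l2 (bhat - bstar)) with hhat3 | hhat3
    · -- bhat is far from bstar : then R < 2√k and the bound is trivial
      have hfarh := (main bhat 0 le_rfl hbhat_feas (by linarith)).2 hhat3.le
      have hR2 : R < 2 * Real.sqrt k := by
        have h := hfarh
        norm_num at h
        exact h
      have e2 : 16 * Real.sqrt k * 3 ≤ 16 * Real.sqrt k * l2 (bhat - bstar) :=
        mul_le_mul_of_nonneg_left hhat3.le (by positivity)
      have h1 : 0 ≤ 8 * Real.sqrt k * l2 (β - bhat) := by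
        have := mul_nonneg hsk (l2_nonneg (β - bhat)); nlinarith
      linarith
    · rcases lt_or_ge 3 (l2 (β - bstar)) with hβ3 | hβ3
      · -- β is far from bstar : then R < 2√k + 2η/(λL) and the bound is easy
        have hfarβ := (main β ηbar hηbar hβ_feas hφβ).2 hβ3.le
        have e1 : 8 * Real.sqrt k * l2 (β - bstar)
            ≤ 8 * Real.sqrt k * (l2 (β - bhat) + l2 (bhat - bstar)) :=
          mul_le_mul_of_nonneg_left htri_l2 (by positivity)
        have e2 : 8 * Real.sqrt k * 3 ≤ 8 * Real.sqrt k * l2 (β - bstar) :=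
          mul_le_mul_of_nonneg_left hβ3.le (by positivity)
        have h3 : 0 ≤ Real.sqrt k * l2 (bhat - bstar) :=
          mul_nonneg hsk (l2_nonneg _)
        linarith
      · -- both vectors are near bstar : cone inequalities
        have c1 := (main β ηbar hηbar hβ_feas hφβ).1 hβ3
        have c2 := (main bhat 0 le_rfl hbhat_feas (by linarith)).1 hhat3
        have c2' : l1 (bhat - bstar) ≤ (8/3) * Real.sqrt k * l2 (bhat - bstar) := by
          have h := c2
          norm_num at h
          exact h
        have e1 : (8/3) * Real.sqrt k * l2 (β - bstar)
            ≤ (8/3) * Real.sqrt k * (l2 (β - bhat) + l2 (bhat - bstar)) :=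
          mul_le_mul_of_nonneg_left htri_l2 (by positivity)
        have h3 : 0 ≤ Real.sqrt k * l2 (bhat - bstar) := mul_nonneg hsk (l2_nonneg _)
        have h4 : 0 ≤ Real.sqrt k * l2 (β - bhat) := mul_nonneg hsk (l2_nonneg _)
        have h5 : 0 ≤ ηbar / (lam * L) := div_nonneg hηbar hll.le
        have heq : 2 * ηbar / (lam * L) = 2 * (ηbar / (lam * L)) := by ring
        linarith
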